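/- Let A be a complete hermitian continuous inverse algebra with continuous involution, and let p = p* = p² ∈ A be a self-adjoint idempotent. Then for every invertible element a ∈ A^×, the element p a* a p is invertible in the corner algebra pAp, i.e. there exists b ∈ pAp with (p a* a p)·b = b·(p a* a p) = p. -/

import Mathlib

/-- In a complete hermitian continuous inverse algebra with continuous involution,
for a self-adjoint idempotent `p` and any invertible `a`, the element `p a* a p`
is invertible in the corner algebra `pAp` (with unit `p`). -/
theorem stmt_7 (A : Type*) [Ring A] [Algebra ℂ A] [StarRing A] [StarModule ℂ A]
    [UniformSpace A] [IsUniformAddGroup A] [CompleteSpace A]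
    [IsTopologicalRing A] [T2Space A] [LocallyConvexSpace ℝ A] [ContinuousSMul ℂ A]
    [ContinuousStar A]
    (hopen : IsOpen {a : A | IsUnit a})
    (hcont : ContinuousOn Ring.inverse {a : A | IsUnit a})
    (hherm : ∀ a : A, star a = a → ∀ z ∈ spectrum ℂ a, z.im = 0)
    (p : A) (hpstar : star p = p) (hp : p * p = p) :
    ∀ a : A, IsUnit a →
      ∃ b : A, p * b * p = b ∧ (p * star a * a * p) * b = p ∧ b * (p * star a * a * p) = p := by
  intro a ha
  obtain ⟨α, rfl⟩ := ha
  have hp' : ∀ y : A, p * (p * y) = p * y := fun y => by rw [← mul_assoc, hp]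
  -- the idempotent k = α p α⁻¹ and its adjoint l
  set k : A := (α : A) * (p * ((α⁻¹ : Aˣ) : A)) with hkdef
  clear_value k
  have hk : k * k = k := by
    rw [hkdef]
    calc ((α:A) * (p * ((α⁻¹:Aˣ):A))) * ((α:A) * (p * ((α⁻¹:Aˣ):A)))
        = (α:A) * (p * (((α⁻¹:Aˣ):A) * ((α:A) * (p * ((α⁻¹:Aˣ):A))))) := by
          simp only [mul_assoc]
      _ = (α:A) * (p * (p * ((α⁻¹:Aˣ):A))) := by rw [Units.inv_mul_cancel_left]
      _ = (α:A) * (p * ((α⁻¹:Aˣ):A)) := by rw [hp']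
  set l : A := star k with hldef
  clear_value l
  have hl : l * l = l := by rw [hldef, ← star_mul, hk]
  have hstarl : star l = k := by rw [hldef, star_star]
  set d : A := k - l with hddef
  clear_value d
  have hstard : star d = -d := by
    rw [hddef, star_sub, hstarl, ← hldef]
    exact (neg_sub k l).symm
  set x : A := Complex.I • d with hxdef
  clear_value x
  have hstarx : star x = x := by
    rw [hxdef, star_smul, hstard, Complex.star_def, Complex.conj_I, neg_smul, smul_neg,
      neg_neg]
  have hu1 : IsUnit (algebraMap ℂ A Complex.I - x) := by
    by_contra h
    have h2 := hherm x hstarx Complex.I (spectrum.mem_iff.mpr h)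
    simp at h2
  have hu2 : IsUnit (algebraMap ℂ A (-Complex.I) - x) := by
    by_contra h
    have h2 := hherm x hstarx (-Complex.I) (spectrum.mem_iff.mpr h)
    simp at h2
  set Δ : A := 1 - d * d with hDdef
  clear_value Δ
  have hxx : x * x = -(d * d) := by
    rw [hxdef, smul_mul_smul_comm, Complex.I_mul_I, neg_one_smul]
  have hfact : Δ = (algebraMap ℂ A Complex.I - x) * (algebraMap ℂ A (-Complex.I) - x) := by
    have hcomm : algebraMap ℂ A Complex.I * x = x * algebraMap ℂ A Complex.I :=
      Algebra.commutes _ _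
    have hjj : algebraMap ℂ A Complex.I * algebraMap ℂ A Complex.I = -1 := by
      rw [← map_mul, Complex.I_mul_I, map_neg, map_one]
    have e : (algebraMap ℂ A Complex.I - x) * (algebraMap ℂ A (-Complex.I) - x)
        = -(algebraMap ℂ A Complex.I * algebraMap ℂ A Complex.I)
          - algebraMap ℂ A Complex.I * x + x * algebraMap ℂ A Complex.I + x * x := by
      rw [map_neg]; noncomm_ring
    rw [hDdef, e, hjj, hcomm, hxx]
    abel
  have hΔu : IsUnit Δ := by rw [hfact]; exact hu1.mul hu2
  obtain ⟨w, hw⟩ := hΔu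
  set δ : A := ((w⁻¹ : Aˣ) : A) with hδdef
  clear_value δ
  have hδΔ : δ * Δ = 1 := by rw [hδdef, ← hw]; exact w.inv_mul
  have hΔδ : Δ * δ = 1 := by rw [hδdef, ← hw]; exact w.mul_inv
  -- basic idempotent computations
  have hk' : ∀ y : A, k * (k * y) = k * y := fun y => by rw [← mul_assoc, hk]
  have hl' : ∀ y : A, l * (l * y) = l * y := fun y => by rw [← mul_assoc, hl]
  have hDk : (d * d) * k = k - k * (l * k) := by
    have e : (d * d) * k = k * (k * k) - k * (l * k) - l * (k * k) + l * (l * k) := by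
      rw [hddef]; noncomm_ring
    rw [e]; simp only [hk, hl, hk', hl']; abel
  have hkD : k * (d * d) = k - k * (l * k) := by
    have e : k * (d * d) = k * (k * k) - k * (k * l) - k * (l * k) + k * (l * l) := by
      rw [hddef]; noncomm_ring
    rw [e]; simp only [hk, hl, hk', hl']; abel
  have hDl : (d * d) * l = l - l * (k * l) := by
    have e : (d * d) * l = k * (k * l) - k * (l * l) - l * (k * l) + l * (l * l) := by
      rw [hddef]; noncomm_ring
    rw [e]; simp only [hk, hl, hk', hl']; abel
  have hlD : l * (d * d) = l - l * (k * l) := by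
    have e : l * (d * d) = l * (k * k) - l * (k * l) - l * (l * k) + l * (l * l) := by
      rw [hddef]; noncomm_ring
    rw [e]; simp only [hk, hl, hk', hl']; abel
  have hΔk : Δ * k = k * Δ := by rw [hDdef, sub_mul, mul_sub, one_mul, mul_one, hDk, hkD]
  have hΔl : Δ * l = l * Δ := by rw [hDdef, sub_mul, mul_sub, one_mul, mul_one, hDl, hlD]
  have hδk : δ * k = k * δ := by
    calc δ * k = δ * (k * (Δ * δ)) := by rw [hΔδ, mul_one]
      _ = δ * ((k * Δ) * δ) := by rw [mul_assoc]
      _ = δ * ((Δ * k) * δ) := by rw [hΔk]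
      _ = (δ * Δ) * (k * δ) := by simp only [mul_assoc]
      _ = k * δ := by rw [hδΔ, one_mul]
  have hδl : δ * l = l * δ := by
    calc δ * l = δ * (l * (Δ * δ)) := by rw [hΔδ, mul_one]
      _ = δ * ((l * Δ) * δ) := by rw [mul_assoc]
      _ = δ * ((Δ * l) * δ) := by rw [hΔl]
      _ = (δ * Δ) * (l * δ) := by simp only [mul_assoc]
      _ = l * δ := by rw [hδΔ, one_mul]
  have hδk' : ∀ y : A, δ * (k * y) = k * (δ * y) := fun y => by
    rw [← mul_assoc, hδk, mul_assoc]
  have hδl' : ∀ y : A, δ * (l * y) = l * (δ * y) := fun y => by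
    rw [← mul_assoc, hδl, mul_assoc]
  have hklk : k * (l * k) = k * Δ := by
    rw [hDdef, mul_sub, mul_one, hkD]; abel
  have hlkl : l * (k * l) = Δ * l := by
    rw [hDdef, sub_mul, one_mul, hDl]; abel
  -- the range projection P of k
  set P : A := k * (l * δ) with hPdef
  clear_value P
  have hstarΔ : star Δ = Δ := by
    rw [hDdef, star_sub, star_one, star_mul, hstard, neg_mul_neg]
  have hstarδ : star δ = δ := by
    have h1 : star δ * Δ = 1 := by rw [← hstarΔ, ← star_mul, hΔδ, star_one]
    calc star δ = star δ * (Δ * δ) := by rw [hΔδ, mul_one]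
      _ = (star δ * Δ) * δ := by rw [mul_assoc]
      _ = δ := by rw [h1, one_mul]
  have hstarP : star P = P := by
    rw [hPdef, star_mul, star_mul, hstarδ, hstarl, ← hldef]
    calc (δ * k) * l = (k * δ) * l := by rw [hδk]
      _ = k * (δ * l) := by rw [mul_assoc]
      _ = k * (l * δ) := by rw [hδl]
  have hPk : P * k = k := by
    have e : P * k = k * (l * (δ * k)) := by rw [hPdef]; simp only [mul_assoc]
    rw [e, hδk]
    have e2 : k * (l * (k * δ)) = (k * (l * k)) * δ := by simp only [mul_assoc]
    rw [e2, hklk, mul_assoc, hΔδ, mul_one]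
  have hkP : k * P = P := by
    rw [hPdef]
    exact hk' (l * δ)
  have hPl : P * l = P := by
    have e : P * l = k * (l * (δ * l)) := by rw [hPdef]; simp only [mul_assoc]
    rw [e, hδl, hl' δ]
    exact hPdef.symm
  -- now the corner element and its inverse
  obtain ⟨u, hudef⟩ : ∃ u : A, u = p * ((α⁻¹ : Aˣ) : A) := ⟨_, rfl⟩
  have hkc : k * ((α:A) * p) = (α:A) * p := by
    rw [hkdef]
    calc ((α:A) * (p * ((α⁻¹:Aˣ):A))) * ((α:A) * p)
        = (α:A) * (p * (((α⁻¹:Aˣ):A) * ((α:A) * p))) := by simp only [mul_assoc]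
      _ = (α:A) * (p * p) := by rw [Units.inv_mul_cancel_left]
      _ = (α:A) * p := by rw [hp]
  have hPc : P * ((α:A) * p) = (α:A) * p := by
    conv_lhs => rw [← hkc]
    rw [← mul_assoc, hPk, hkc]
  have huc : u * ((α:A) * p) = p := by
    rw [hudef]
    calc (p * ((α⁻¹:Aˣ):A)) * ((α:A) * p)
        = p * (((α⁻¹:Aˣ):A) * ((α:A) * p)) := by simp only [mul_assoc]
      _ = p * p := by rw [Units.inv_mul_cancel_left]
      _ = p := hp
  have hcu : ((α:A) * p) * u = k := by
    rw [hudef, hkdef]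
    calc ((α:A) * p) * (p * ((α⁻¹:Aˣ):A))
        = (α:A) * (p * (p * ((α⁻¹:Aˣ):A))) := by simp only [mul_assoc]
      _ = (α:A) * (p * ((α⁻¹:Aˣ):A)) := by rw [hp']
  have hpu' : p * u = u := by rw [hudef, ← mul_assoc, hp]
  have hsup : star u * p = star u := by
    rw [hudef, star_mul, hpstar, mul_assoc, hp]
  have hscP : star ((α:A) * p) * P = star ((α:A) * p) := by
    rw [← hstarP, ← star_mul, hPc]
  have hgoal2' : p * star (α:A) * (α:A) * p = star ((α:A) * p) * ((α:A) * p) := by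
    rw [star_mul, hpstar]
    simp only [mul_assoc]
  refine ⟨u * (P * star u), ?_, ?_, ?_⟩
  · -- p * b * p = b
    calc (p * (u * (P * star u))) * p
        = ((p * u) * (P * star u)) * p := by rw [← mul_assoc p u _]
      _ = (u * (P * star u)) * p := by rw [hpu']
      _ = u * (P * (star u * p)) := by simp only [mul_assoc]
      _ = u * (P * star u) := by rw [hsup]
  · -- (p a* a p) b = p
    rw [hgoal2']
    calc (star ((α:A) * p) * ((α:A) * p)) * (u * (P * star u))
        = star ((α:A) * p) * ((((α:A) * p) * u) * (P * star u)) := by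
          simp only [mul_assoc]
      _ = star ((α:A) * p) * (k * (P * star u)) := by rw [hcu]
      _ = star ((α:A) * p) * ((k * P) * star u) := by rw [mul_assoc]
      _ = star ((α:A) * p) * (P * star u) := by rw [hkP]
      _ = (star ((α:A) * p) * P) * star u := by rw [mul_assoc]
      _ = star ((α:A) * p) * star u := by rw [hscP]
      _ = star (u * ((α:A) * p)) := by rw [← star_mul]
      _ = p := by rw [huc, hpstar]
  · -- b (p a* a p) = p
    rw [hgoal2']
    calc (u * (P * star u)) * (star ((α:A) * p) * ((α:A) * p))
        = u * (P * ((star u * star ((α:A) * p)) * ((α:A) * p))) := by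
          simp only [mul_assoc]
      _ = u * (P * (star (((α:A) * p) * u) * ((α:A) * p))) := by rw [← star_mul]
      _ = u * (P * (star k * ((α:A) * p))) := by rw [hcu]
      _ = u * (P * (l * ((α:A) * p))) := by rw [← hldef]
      _ = u * ((P * l) * ((α:A) * p)) := by simp only [mul_assoc]
      _ = u * (P * ((α:A) * p)) := by rw [hPl]
      _ = u * ((α:A) * p) := by rw [hPc]
      _ = p := huc
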